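/- Let K ≥ 2, ε ∈ (0,1), and let f(x) = argmax_{i∈[K]}(w⁽ⁱ⁾·x + tᵢ) be a multiclass linear classifier on ℝ^d. Let V be a nonzero subspace such that ‖proj_V(w⁽ⁱ⁾ − w⁽ʲ⁾)‖ ≤ (ε²/K⁴)‖w⁽ⁱ⁾ − w⁽ʲ⁾‖ for all i ≠ j. Then P_{x∼N(0,I)}[f(x) ≠ f^{⊥V}(x)] ≤ Cε for an absolute constant C, where f^{⊥V}(x) = argmax_{i∈[K]}(proj_{V^⊥}(w⁽ⁱ⁾)·x + tᵢ). -/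

import Mathlib

open MeasureTheory ProbabilityTheory RealInnerProductSpace

/-- The standard Gaussian measure on `EuclideanSpace ℝ (Fin d)`. -/
noncomputable def stdGaussianE (d : ℕ) : Measure (EuclideanSpace ℝ (Fin d)) :=
  (Measure.pi fun _ : Fin d => gaussianReal 0 1).map
    (MeasurableEquiv.toLp 2 (Fin d → ℝ))

open Real

lemma gaussianPDFReal_conv (a b : NNReal) (ha : a ≠ 0) (hb : b ≠ 0) (u : ℝ) :
    ∫ x : ℝ, gaussianPDFReal 0 a x * gaussianPDFReal 0 b (u - x) =
      gaussianPDFReal 0 (a + b) u := by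
  have ha' : (0:ℝ) < a := lt_of_le_of_ne a.2 (by exact_mod_cast (Ne.symm ha))
  have hb' : (0:ℝ) < b := lt_of_le_of_ne b.2 (by exact_mod_cast (Ne.symm hb))
  have hab : (0:ℝ) < (a:ℝ) + b := by linarith
  set c : ℝ := ((a:ℝ) + b) / (2 * a * b) with hc
  have hcpos : 0 < c := by positivity
  set m : ℝ := (a:ℝ) * u / ((a:ℝ) + b) with hm
  have key : ∀ x : ℝ, gaussianPDFReal 0 a x * gaussianPDFReal 0 b (u - x) =
      ((Real.sqrt (2 * π * a))⁻¹ * (Real.sqrt (2 * π * b))⁻¹ *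
        Real.exp (-u ^ 2 / (2 * ((a:ℝ) + b)))) * Real.exp (-c * (x - m) ^ 2) := by
    intro x
    have h : -x ^ 2 / (2 * (a:ℝ)) + -(u - x) ^ 2 / (2 * (b:ℝ)) =
        -u ^ 2 / (2 * ((a:ℝ) + (b:ℝ))) + -c * (x - m) ^ 2 := by
      rw [hc, hm]; field_simp; ring
    simp only [gaussianPDFReal, sub_zero]
    rw [mul_mul_mul_comm, ← Real.exp_add, h, Real.exp_add]
    ring
  rw [MeasureTheory.integral_congr_ae (Filter.Eventually.of_forall key)]
  rw [MeasureTheory.integral_const_mul]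
  have h2 : ∫ x : ℝ, Real.exp (-c * (x - m) ^ 2) = Real.sqrt (π / c) := by
    rw [integral_sub_right_eq_self (μ := volume) (fun x => Real.exp (-c * x ^ 2)) m]
    exact integral_gaussian c
  rw [h2]
  simp only [gaussianPDFReal, sub_zero, NNReal.coe_add]
  rw [← Real.sqrt_inv, ← Real.sqrt_inv, ← Real.sqrt_inv,
    ← Real.sqrt_mul (by positivity) _]
  have h3 : Real.sqrt ((2 * π * (a:ℝ))⁻¹ * (2 * π * (b:ℝ))⁻¹) * Real.sqrt (π / c) =
      Real.sqrt ((2 * π * ((a:ℝ) + (b:ℝ)))⁻¹) := by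
    rw [← Real.sqrt_mul (by positivity)]
    congr 1
    rw [hc]
    field_simp
  rw [mul_right_comm, h3]

lemma integrable_conv_integrand (a b : NNReal) (ha : a ≠ 0) (hb : b ≠ 0) (u : ℝ) :
    Integrable (fun x : ℝ => gaussianPDFReal 0 a x * gaussianPDFReal 0 b (u - x)) := by
  have hb' : (0:ℝ) < b := lt_of_le_of_ne b.2 (by exact_mod_cast (Ne.symm hb))
  have hbd : ∀ x : ℝ, ‖gaussianPDFReal 0 a x * gaussianPDFReal 0 b (u - x)‖ ≤
      (Real.sqrt (2 * π * b))⁻¹ * gaussianPDFReal 0 a x := by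
    intro x
    rw [Real.norm_of_nonneg (mul_nonneg (gaussianPDFReal_nonneg _ _ _)
      (gaussianPDFReal_nonneg _ _ _)), mul_comm]
    apply mul_le_mul_of_nonneg_right _ (gaussianPDFReal_nonneg _ _ _)
    rw [gaussianPDFReal]
    calc (Real.sqrt (2 * π * b))⁻¹ * Real.exp (-(u - x - 0) ^ 2 / (2 * b))
        ≤ (Real.sqrt (2 * π * b))⁻¹ * 1 := by
          apply mul_le_mul_of_nonneg_left _ (by positivity)
          rw [Real.exp_le_one_iff]
          apply div_nonpos_of_nonpos_of_nonneg (neg_nonpos.mpr (sq_nonneg _)) (by positivity)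
      _ = _ := mul_one _
  exact (Integrable.const_mul (integrable_gaussianPDFReal 0 a) _).mono'
    ((measurable_gaussianPDFReal 0 a).mul
      ((measurable_gaussianPDFReal 0 b).comp (measurable_const.sub measurable_id))).aestronglyMeasurable
    (Filter.Eventually.of_forall hbd)

lemma gaussianPDF_conv (a b : NNReal) (ha : a ≠ 0) (hb : b ≠ 0) (u : ℝ) :
    ∫⁻ x : ℝ, gaussianPDF 0 a x * gaussianPDF 0 b (u - x) = gaussianPDF 0 (a + b) u := by
  simp only [gaussianPDF]
  have : ∀ x : ℝ, ENNReal.ofReal (gaussianPDFReal 0 a x) *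
      ENNReal.ofReal (gaussianPDFReal 0 b (u - x)) =
      ENNReal.ofReal (gaussianPDFReal 0 a x * gaussianPDFReal 0 b (u - x)) := fun x =>
    (ENNReal.ofReal_mul (gaussianPDFReal_nonneg _ _ _)).symm
  simp_rw [this]
  rw [← ofReal_integral_eq_lintegral_ofReal (integrable_conv_integrand a b ha hb u)
      (Filter.Eventually.of_forall fun x =>
        mul_nonneg (gaussianPDFReal_nonneg _ _ _) (gaussianPDFReal_nonneg _ _ _)),
    gaussianPDFReal_conv a b ha hb u]

lemma gaussianReal_conv (a b : NNReal) :
    Measure.map (fun p : ℝ × ℝ => p.1 + p.2) ((gaussianReal 0 a).prod (gaussianReal 0 b)) =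
      gaussianReal 0 (a + b) := by
  rcases eq_or_ne a 0 with rfl | ha
  · rw [gaussianReal_zero_var, Measure.dirac_prod, Measure.map_map measurable_add (by fun_prop),
      zero_add]
    have : ((fun p : ℝ × ℝ => p.1 + p.2) ∘ Prod.mk (0:ℝ)) = id := by
      funext x; simp
    rw [this, Measure.map_id]
  rcases eq_or_ne b 0 with rfl | hb
  · rw [gaussianReal_zero_var, Measure.prod_dirac, Measure.map_map measurable_add (by fun_prop),
      add_zero]
    have : ((fun p : ℝ × ℝ => p.1 + p.2) ∘ (fun x : ℝ => (x, (0:ℝ)))) = id := by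
      funext x; simp
    rw [this, Measure.map_id]
  ext s hs
  rw [Measure.map_apply measurable_add hs]
  rw [gaussianReal_of_var_ne_zero 0 ha, gaussianReal_of_var_ne_zero 0 hb,
    gaussianReal_of_var_ne_zero 0 (by simp [ha, hb])]
  rw [Measure.prod_apply (measurable_add hs)]
  have h1 : ∀ x : ℝ, (volume.withDensity (gaussianPDF 0 b))
      (Prod.mk x ⁻¹' ((fun p : ℝ × ℝ => p.1 + p.2) ⁻¹' s)) =
      ∫⁻ y, gaussianPDF 0 b y * s.indicator (fun _ => 1) (x + y) := by
    intro x
    have hpre : (Prod.mk x ⁻¹' ((fun p : ℝ × ℝ => p.1 + p.2) ⁻¹' s)) = (x + ·) ⁻¹' s := rfl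
    rw [hpre, withDensity_apply _ (measurable_const_add x hs)]
    rw [← lintegral_indicator (measurable_const_add x hs)]
    congr 1 with y
    by_cases hy : x + y ∈ s <;>
      simp [Set.indicator_apply, hy, Set.mem_preimage]
  simp_rw [h1]
  have h2 : ∀ x : ℝ, ∫⁻ y, gaussianPDF 0 b y * s.indicator (fun _ => 1) (x + y) =
      ∫⁻ u, gaussianPDF 0 b (u - x) * s.indicator (fun _ => 1) u := by
    intro x
    rw [← lintegral_add_left_eq_self (fun u => gaussianPDF 0 b (u - x) *
      s.indicator (fun _ => 1) u) x]
    simp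
  simp_rw [h2]
  rw [MeasureTheory.lintegral_withDensity_eq_lintegral_mul _ (measurable_gaussianPDF 0 a)]
  swap
  · exact Measurable.lintegral_prod_right' (f := fun q : ℝ × ℝ =>
      gaussianPDF 0 b (q.2 - q.1) * s.indicator (fun _ => 1) q.2)
      (Measurable.mul ((measurable_gaussianPDF 0 b).comp (measurable_snd.sub measurable_fst))
        ((measurable_const.indicator hs).comp measurable_snd))
  have h3 : ∀ x : ℝ, gaussianPDF 0 a x * ∫⁻ u, gaussianPDF 0 b (u - x) *
      s.indicator (fun _ => 1) u = ∫⁻ u, gaussianPDF 0 a x *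
        (gaussianPDF 0 b (u - x) * s.indicator (fun _ => 1) u) := by
    intro x
    rw [lintegral_const_mul]
    exact ((measurable_gaussianPDF 0 b).comp (measurable_id.sub measurable_const)).mul
      (measurable_const.indicator hs)
  simp only [Pi.mul_apply]
  simp_rw [h3]
  rw [lintegral_lintegral_swap]
  swap
  · apply Measurable.aemeasurable
    apply Measurable.mul
    · exact (measurable_gaussianPDF 0 a).comp measurable_fst
    · exact (((measurable_gaussianPDF 0 b).comp (measurable_snd.sub measurable_fst)).mul
        ((measurable_const.indicator hs).comp measurable_snd))
  have h4 : ∀ u : ℝ, ∫⁻ x, gaussianPDF 0 a x * (gaussianPDF 0 b (u - x) *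
      s.indicator (fun _ => 1) u) = gaussianPDF 0 (a + b) u * s.indicator (fun _ => 1) u := by
    intro u
    simp_rw [← mul_assoc]
    rw [lintegral_mul_const, gaussianPDF_conv a b ha hb u]
    exact (measurable_gaussianPDF 0 a).mul
      ((measurable_gaussianPDF 0 b).comp (measurable_const.sub measurable_id))
  simp_rw [h4]
  have h5 : ∀ u : ℝ, gaussianPDF 0 (a + b) u * s.indicator (fun _ => 1) u =
      s.indicator (fun v => gaussianPDF 0 (a+b) v) u := by
    intro u
    by_cases hu : u ∈ s <;> simp [Set.indicator_apply, hu]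
  simp_rw [h5]
  rw [lintegral_indicator hs, withDensity_apply _ hs]

lemma map_sum_gauss : ∀ (n : ℕ) (c : Fin n → ℝ),
    Measure.map (fun y : Fin n → ℝ => ∑ i, c i * y i)
      (Measure.pi fun _ : Fin n => gaussianReal 0 1) =
      gaussianReal 0 (∑ i, (c i) ^ 2).toNNReal := by
  intro n
  induction n with
  | zero =>
    intro c
    simp only [Finset.univ_eq_empty, Finset.sum_empty, Real.toNNReal_zero]
    rw [show (fun y : Fin 0 → ℝ => (0:ℝ)) = fun _ => 0 from rfl, Measure.map_const,
      measure_univ, one_smul, gaussianReal_zero_var]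
  | succ n ih =>
    intro c
    have mp := measurePreserving_piFinSuccAbove (fun _ : Fin (n+1) => gaussianReal 0 1) 0
    set e := MeasurableEquiv.piFinSuccAbove (fun _ : Fin (n+1) => ℝ) 0 with he
    have hpi : (Measure.pi fun _ : Fin (n+1) => gaussianReal 0 1) =
        Measure.map e.symm (((gaussianReal 0 1)).prod
          (Measure.pi fun _ : Fin n => gaussianReal 0 1)) := (mp.symm e).map_eq.symm
    rw [hpi, Measure.map_map (by fun_prop) e.symm.measurable]
    have hcomp : ((fun y : Fin (n+1) → ℝ => ∑ i, c i * y i) ∘ e.symm) =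
        (fun q : ℝ × ℝ => q.1 + q.2) ∘
          (Prod.map (fun x : ℝ => c 0 * x)
            (fun y : Fin n → ℝ => ∑ j, c (Fin.succAbove 0 j) * y j)) := by
      funext p
      simp only [Function.comp_apply, Prod.map_apply]
      rw [he, MeasurableEquiv.piFinSuccAbove_symm_apply]
      simp only [Fin.insertNthEquiv, Equiv.coe_fn_mk]
      rw [Fin.sum_univ_succAbove
        (fun i => c i * (Fin.insertNth (α := fun _ => ℝ) 0 p.1 p.2 i)) 0]
      simp [Fin.insertNth_apply_same, Fin.insertNth_apply_succAbove]
    rw [hcomp, ← Measure.map_map (by fun_prop) (by fun_prop),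
      ← Measure.map_prod_map _ _ (by fun_prop) (by fun_prop)]
    rw [gaussianReal_map_const_mul (μ := 0) (v := 1) (c 0), ih]
    rw [mul_zero, gaussianReal_conv]
    congr 1
    refine NNReal.coe_injective ?_
    push_cast
    rw [Real.coe_toNNReal _ (Finset.sum_nonneg fun i _ => sq_nonneg _),
      Real.coe_toNNReal _ (Finset.sum_nonneg fun i _ => sq_nonneg _),
      Fin.sum_univ_succAbove (fun i => c i ^ 2) 0]
    ring

lemma map_inner_stdGaussian (d : ℕ) (u : EuclideanSpace ℝ (Fin d)) :
    Measure.map (fun z => ⟪u, z⟫) (stdGaussianE d) =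
      gaussianReal 0 ((‖u‖ ^ 2).toNNReal) := by
  rw [stdGaussianE, Measure.map_map (by exact (continuous_const.inner continuous_id).measurable)
    (MeasurableEquiv.toLp 2 (Fin d → ℝ)).measurable]
  have : ((fun z : EuclideanSpace ℝ (Fin d) => ⟪u, z⟫) ∘
      (MeasurableEquiv.toLp 2 (Fin d → ℝ))) = fun y : Fin d → ℝ => ∑ i, u i * y i := by
    funext y
    simp only [Function.comp_apply]
    rw [PiLp.inner_apply]
    exact Finset.sum_congr rfl fun i _ => by simp [mul_comm]
  rw [this, map_sum_gauss]
  congr 1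
  rw [EuclideanSpace.norm_eq]
  rw [Real.sq_sqrt (Finset.sum_nonneg fun i _ => sq_nonneg _)]
  simp [Real.norm_eq_abs, sq_abs]

lemma gauss_interval (v : NNReal) (hv : v ≠ 0) (s R : ℝ) (hR : 0 ≤ R) :
    gaussianReal 0 v {x : ℝ | |x + s| ≤ R} ≤
      ENNReal.ofReal (2 * R / Real.sqrt (2 * π * v)) := by
  have hv' : (0:ℝ) < v := lt_of_le_of_ne v.2 (by exact_mod_cast (Ne.symm hv))
  have hset : {x : ℝ | |x + s| ≤ R} = Set.Icc (-s - R) (-s + R) := by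
    ext x
    simp only [Set.mem_setOf_eq, Set.mem_Icc, abs_le]
    constructor <;> intro h <;> constructor <;> linarith [h.1, h.2]
  rw [hset, gaussianReal_of_var_ne_zero 0 hv, withDensity_apply _ measurableSet_Icc]
  calc ∫⁻ x in Set.Icc (-s - R) (-s + R), gaussianPDF 0 v x
      ≤ ∫⁻ _ in Set.Icc (-s - R) (-s + R), ENNReal.ofReal ((Real.sqrt (2 * π * v))⁻¹) := by
        apply lintegral_mono
        intro x
        apply ENNReal.ofReal_le_ofReal
        rw [gaussianPDFReal]
        calc (Real.sqrt (2 * π * v))⁻¹ * Real.exp (-(x - 0) ^ 2 / (2 * v))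
            ≤ (Real.sqrt (2 * π * v))⁻¹ * 1 := by
              apply mul_le_mul_of_nonneg_left _ (by positivity)
              rw [Real.exp_le_one_iff]
              exact div_nonpos_of_nonpos_of_nonneg (neg_nonpos.mpr (sq_nonneg _)) (by positivity)
          _ = _ := mul_one _
    _ = ENNReal.ofReal ((Real.sqrt (2 * π * v))⁻¹) * volume (Set.Icc (-s - R) (-s + R)) :=
        setLIntegral_const _ _
    _ ≤ ENNReal.ofReal (2 * R / Real.sqrt (2 * π * v)) := by
        rw [Real.volume_Icc, ← ENNReal.ofReal_mul (by positivity)]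
        apply ENNReal.ofReal_le_ofReal
        rw [show -s + R - (-s - R) = 2 * R by ring]
        rw [div_eq_inv_mul]

lemma gauss_tail (v : NNReal) (hv : v ≠ 0) (R : ℝ) (hR : 0 ≤ R) :
    gaussianReal 0 v {x : ℝ | R ≤ |x|} ≤
      ENNReal.ofReal (2 * Real.exp (-(R ^ 2) / (4 * v))) := by
  have hv' : (0:ℝ) < v := lt_of_le_of_ne v.2 (by exact_mod_cast (Ne.symm hv))
  have hset : MeasurableSet {x : ℝ | R ≤ |x|} :=
    (isClosed_le continuous_const continuous_abs).measurableSet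
  rw [gaussianReal_of_var_ne_zero 0 hv, withDensity_apply _ hset]
  set c : ℝ := (Real.sqrt (2 * π * v))⁻¹ * Real.exp (-(R ^ 2) / (4 * v)) with hc
  set b : ℝ := (4 * (v:ℝ))⁻¹ with hb
  have hbpos : 0 < b := by positivity
  have hcpos : 0 < c := by positivity
  calc ∫⁻ x in {x : ℝ | R ≤ |x|}, gaussianPDF 0 v x
      ≤ ∫⁻ x in {x : ℝ | R ≤ |x|}, ENNReal.ofReal (c * Real.exp (-b * x ^ 2)) := by
        apply setLIntegral_mono (by fun_prop)
        intro x hx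
        have hx' : R ≤ |x| := hx
        have hx2 : R ^ 2 ≤ x ^ 2 := by
          calc R ^ 2 ≤ |x| ^ 2 := by gcongr
            _ = x ^ 2 := sq_abs x
        apply ENNReal.ofReal_le_ofReal
        rw [gaussianPDFReal, hc, mul_assoc ((Real.sqrt (2 * π * (v:ℝ)))⁻¹), ← Real.exp_add]
        apply mul_le_mul_of_nonneg_left _ (by positivity)
        apply Real.exp_le_exp.mpr
        rw [sub_zero, hb]
        have heq : -x ^ 2 / (2 * (v:ℝ)) = -x ^ 2 / (4 * (v:ℝ)) + -(4 * (v:ℝ))⁻¹ * x ^ 2 := by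
          field_simp
          ring
        rw [heq]
        have h2 : -x ^ 2 / (4 * (v:ℝ)) ≤ -R ^ 2 / (4 * (v:ℝ)) := by
          gcongr
        linarith
    _ ≤ ∫⁻ x, ENNReal.ofReal (c * Real.exp (-b * x ^ 2)) := setLIntegral_le_lintegral _ _
    _ = ENNReal.ofReal (∫ x, c * Real.exp (-b * x ^ 2)) := by
        rw [← ofReal_integral_eq_lintegral_ofReal
          ((integrable_exp_neg_mul_sq hbpos).const_mul c)
          (Filter.Eventually.of_forall fun x => by positivity)]
    _ ≤ ENNReal.ofReal (2 * Real.exp (-(R ^ 2) / (4 * v))) := by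
        apply ENNReal.ofReal_le_ofReal
        rw [MeasureTheory.integral_const_mul, integral_gaussian b, hc]
        rw [mul_comm ((Real.sqrt (2 * π * (v:ℝ)))⁻¹) _, mul_assoc,
          mul_comm (2:ℝ) (Real.exp (-(R ^ 2) / (4 * (v:ℝ))))]
        apply mul_le_mul_of_nonneg_left _ (Real.exp_nonneg _)
        rw [hb, ← Real.sqrt_inv, ← Real.sqrt_mul (by positivity)]
        rw [show (2 * π * (v:ℝ))⁻¹ * (π / (4 * (v:ℝ))⁻¹) = 2 by field_simp; ring]
        have : Real.sqrt 2 ≤ 2 := by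
          nlinarith [Real.sq_sqrt (by norm_num : (0:ℝ) ≤ 2), Real.sqrt_nonneg 2]
        linarith

lemma pair_bound {d K : ℕ} (hK : 2 ≤ K) {ε : ℝ} (hε : 0 < ε) (hε1 : ε < 1)
    (u v : EuclideanSpace ℝ (Fin d)) (hu : u ≠ 0)
    (hv : ‖v‖ ≤ ε ^ 2 / (K : ℝ) ^ 4 * ‖u‖) (s : ℝ) :
    stdGaussianE d {z | |⟪u, z⟫ + s| ≤ |⟪v, z⟫|} ≤
      ENNReal.ofReal (3 * ε / (K : ℝ) ^ 2) := by
  have hK' : (2:ℝ) ≤ (K:ℝ) := by exact_mod_cast hK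
  have hKpos : (0:ℝ) < (K:ℝ) := by linarith
  have hnu : 0 < ‖u‖ := norm_pos_iff.mpr hu
  set R : ℝ := ε * ‖u‖ / (K:ℝ) ^ 2 with hRdef
  have hR : 0 < R := by positivity
  have hsub : {z : EuclideanSpace ℝ (Fin d) | |⟪u, z⟫ + s| ≤ |⟪v, z⟫|} ⊆
      {z | |⟪u, z⟫ + s| ≤ R} ∪ {z | R ≤ |⟪v, z⟫|} := by
    intro z hz
    rcases le_or_gt R |⟪v, z⟫| with h | h
    · exact Or.inr h
    · exact Or.inl (le_trans hz h.le)
  refine le_trans (le_trans (measure_mono hsub) (measure_union_le _ _)) ?_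
  have hmeas_u : Measurable fun z : EuclideanSpace ℝ (Fin d) => ⟪u, z⟫ :=
    (continuous_const.inner continuous_id).measurable
  have hmeas_v : Measurable fun z : EuclideanSpace ℝ (Fin d) => ⟪v, z⟫ :=
    (continuous_const.inner continuous_id).measurable
  -- first term
  have h1 : stdGaussianE d {z | |⟪u, z⟫ + s| ≤ R} ≤ ENNReal.ofReal (ε / (K:ℝ) ^ 2) := by
    have hset : MeasurableSet {x : ℝ | |x + s| ≤ R} :=
      (isClosed_le (by continuity) continuous_const).measurableSet
    have : {z : EuclideanSpace ℝ (Fin d) | |⟪u, z⟫ + s| ≤ R} =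
        (fun z => ⟪u, z⟫) ⁻¹' {x : ℝ | |x + s| ≤ R} := rfl
    rw [this, ← Measure.map_apply hmeas_u hset, map_inner_stdGaussian]
    have hvar : ((‖u‖ ^ 2).toNNReal : NNReal) ≠ 0 := by
      simp only [ne_eq, Real.toNNReal_eq_zero, not_le]
      positivity
    refine le_trans (gauss_interval _ hvar s R hR.le) ?_
    apply ENNReal.ofReal_le_ofReal
    rw [Real.coe_toNNReal _ (by positivity)]
    have hsq : Real.sqrt (2 * π * ‖u‖ ^ 2) = Real.sqrt (2 * π) * ‖u‖ := by
      rw [Real.sqrt_mul (by positivity), Real.sqrt_sq (norm_nonneg u)]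
    rw [hsq, hRdef]
    have hpi : (2:ℝ) ≤ Real.sqrt (2 * π) := by
      have h4 : (4:ℝ) ≤ 2 * π := by nlinarith [Real.pi_gt_three]
      nlinarith [Real.sq_sqrt (show (0:ℝ) ≤ 2*π by positivity), Real.sqrt_nonneg (2*π),
        Real.sqrt_le_sqrt h4]
    rw [div_le_div_iff₀ (by positivity) (by positivity)]
    have : 2 * (ε * ‖u‖ / (K:ℝ) ^ 2) * (K:ℝ)^2 = 2 * ε * ‖u‖ := by field_simp
    rw [this]
    have hmul : 2 * (ε * ‖u‖) ≤ Real.sqrt (2 * π) * (ε * ‖u‖) :=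
      mul_le_mul_of_nonneg_right hpi (by positivity)
    nlinarith [hmul]
  -- second term
  have h2 : stdGaussianE d {z | R ≤ |⟪v, z⟫|} ≤ ENNReal.ofReal (2 * ε / (K:ℝ) ^ 2) := by
    rcases eq_or_ne v 0 with rfl | hvne
    · have : {z : EuclideanSpace ℝ (Fin d) | R ≤ |⟪(0 : EuclideanSpace ℝ (Fin d)), z⟫|} = ∅ := by
        ext z
        simp only [inner_zero_left, abs_zero, Set.mem_setOf_eq, Set.mem_empty_iff_false,
          iff_false, not_le]
        exact hR
      rw [this]
      simp
    have hnv : 0 < ‖v‖ := norm_pos_iff.mpr hvne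
    have hset : MeasurableSet {x : ℝ | R ≤ |x|} :=
      (isClosed_le continuous_const continuous_abs).measurableSet
    have : {z : EuclideanSpace ℝ (Fin d) | R ≤ |⟪v, z⟫|} =
        (fun z => ⟪v, z⟫) ⁻¹' {x : ℝ | R ≤ |x|} := rfl
    rw [this, ← Measure.map_apply hmeas_v hset, map_inner_stdGaussian]
    have hvar : ((‖v‖ ^ 2).toNNReal : NNReal) ≠ 0 := by
      simp only [ne_eq, Real.toNNReal_eq_zero, not_le]
      positivity
    refine le_trans (gauss_tail _ hvar R hR.le) ?_
    apply ENNReal.ofReal_le_ofReal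
    rw [Real.coe_toNNReal _ (by positivity)]
    have hK4 : (0:ℝ) < (K:ℝ) ^ 4 := by positivity
    have harg : (K:ℝ) ^ 4 / (4 * ε ^ 2) ≤ R ^ 2 / (4 * ‖v‖ ^ 2) := by
      rw [div_le_div_iff₀ (by positivity) (by positivity), hRdef]
      have hv2 : ‖v‖ ^ 2 ≤ (ε ^ 2 / (K:ℝ) ^ 4) ^ 2 * ‖u‖ ^ 2 := by
        have h := mul_self_le_mul_self (norm_nonneg v) hv
        calc ‖v‖ ^ 2 = ‖v‖ * ‖v‖ := sq ‖v‖
          _ ≤ (ε ^ 2 / (K:ℝ) ^ 4 * ‖u‖) * (ε ^ 2 / (K:ℝ) ^ 4 * ‖u‖) := h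
          _ = (ε ^ 2 / (K:ℝ) ^ 4) ^ 2 * ‖u‖ ^ 2 := by ring
      have hexp : (ε * ‖u‖ / (K:ℝ) ^ 2) ^ 2 = ε ^ 2 * ‖u‖ ^ 2 / (K:ℝ) ^ 4 := by
        field_simp
      rw [hexp]
      calc (K:ℝ) ^ 4 * (4 * ‖v‖ ^ 2) ≤ (K:ℝ)^4 * (4 * ((ε ^ 2 / (K:ℝ) ^ 4) ^ 2 * ‖u‖ ^ 2)) := by
            apply mul_le_mul_of_nonneg_left _ (by positivity)
            apply mul_le_mul_of_nonneg_left hv2 (by norm_num)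
        _ = ε ^ 2 * ‖u‖ ^ 2 / (K:ℝ) ^ 4 * (4 * ε ^ 2) := by field_simp
    have hexple : Real.exp (-(R ^ 2) / (4 * ‖v‖ ^ 2)) ≤ 4 * ε ^ 2 / (K:ℝ) ^ 4 := by
      have h1 : Real.exp (-(R ^ 2) / (4 * ‖v‖ ^ 2)) ≤
          Real.exp (-((K:ℝ) ^ 4 / (4 * ε ^ 2))) := by
        apply Real.exp_le_exp.mpr
        rw [neg_div]
        exact neg_le_neg harg
      refine le_trans h1 ?_
      have hx : (0:ℝ) < (K:ℝ) ^ 4 / (4 * ε ^ 2) := by positivity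
      have h2 := Real.add_one_le_exp ((K:ℝ) ^ 4 / (4 * ε ^ 2))
      rw [Real.exp_neg]
      have h3 : (K:ℝ) ^ 4 / (4 * ε ^ 2) ≤ Real.exp ((K:ℝ) ^ 4 / (4 * ε ^ 2)) := by linarith
      have h4 := inv_anti₀ hx h3
      rw [inv_div] at h4
      exact h4
    calc 2 * Real.exp (-(R ^ 2) / (4 * ‖v‖ ^ 2)) ≤ 2 * (4 * ε ^ 2 / (K:ℝ) ^ 4) := by linarith
      _ ≤ 2 * ε / (K:ℝ) ^ 2 := by
          rw [show 2 * (4 * ε ^ 2 / (K:ℝ) ^ 4) = 8 * ε ^ 2 / (K:ℝ) ^ 4 by ring,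
            div_le_div_iff₀ (by positivity) (by positivity)]
          have hK2 : (4:ℝ) ≤ (K:ℝ) ^ 2 := by nlinarith
          nlinarith [mul_le_mul_of_nonneg_left (show 4 * ε ≤ (K:ℝ) ^ 2 by nlinarith)
            (show (0:ℝ) ≤ 2 * ε * (K:ℝ) ^ 2 by positivity)]
  calc stdGaussianE d {z | |⟪u, z⟫ + s| ≤ R} + stdGaussianE d {z | R ≤ |⟪v, z⟫|}
      ≤ ENNReal.ofReal (ε / (K:ℝ) ^ 2) + ENNReal.ofReal (2 * ε / (K:ℝ) ^ 2) :=
        add_le_add h1 h2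
    _ = ENNReal.ofReal (ε / (K:ℝ) ^ 2 + 2 * ε / (K:ℝ) ^ 2) :=
        (ENNReal.ofReal_add (by positivity) (by positivity)).symm
    _ = ENNReal.ofReal (3 * ε / (K:ℝ) ^ 2) := by rw [show ε / (K:ℝ)^2 + 2*ε/(K:ℝ)^2
          = 3 * ε / (K:ℝ)^2 by ring]

/-- Projection lemma for multiclass linear classifiers: there is an absolute constant `C` such
that, for any `K ≥ 2`, `ε ∈ (0,1)`, any nonzero subspace `V` with
`‖proj_V(w⁽ⁱ⁾ - w⁽ʲ⁾)‖ ≤ (ε²/K⁴)‖w⁽ⁱ⁾ - w⁽ʲ⁾‖` for all `i ≠ j`, the classifier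
`f(x) = argmax_i (w⁽ⁱ⁾·x + tᵢ)` and the projected classifier
`f^{⊥V}(x) = argmax_i (proj_{V^⊥}(w⁽ⁱ⁾)·x + tᵢ)` (ties broken by smallest index) agree except
on a set of Gaussian measure at most `Cε`. -/
theorem projected_classifier_close :
    ∃ C > (0 : ℝ), ∀ (d K : ℕ), 2 ≤ K → ∀ ε : ℝ, 0 < ε → ε < 1 →
      ∀ (w : Fin K → EuclideanSpace ℝ (Fin d)) (t : Fin K → ℝ)
        (V : Submodule ℝ (EuclideanSpace ℝ (Fin d))), V ≠ ⊥ →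
      (∀ i j, i ≠ j →
        ‖(Submodule.orthogonalProjectionOnto V (w i - w j) : EuclideanSpace ℝ (Fin d))‖ ≤
          ε ^ 2 / (K : ℝ) ^ 4 * ‖w i - w j‖) →
      ∀ f g : EuclideanSpace ℝ (Fin d) → Fin K,
      (∀ z, (∀ k, ⟪w k, z⟫ + t k ≤ ⟪w (f z), z⟫ + t (f z)) ∧
        (∀ k, ⟪w k, z⟫ + t k = ⟪w (f z), z⟫ + t (f z) → f z ≤ k)) →
      (∀ z, (∀ k,
          ⟪(Submodule.orthogonalProjectionOnto Vᗮ (w k) : EuclideanSpace ℝ (Fin d)), z⟫ + t k ≤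
            ⟪(Submodule.orthogonalProjectionOnto Vᗮ (w (g z)) : EuclideanSpace ℝ (Fin d)), z⟫ + t (g z)) ∧
        (∀ k,
          ⟪(Submodule.orthogonalProjectionOnto Vᗮ (w k) : EuclideanSpace ℝ (Fin d)), z⟫ + t k =
            ⟪(Submodule.orthogonalProjectionOnto Vᗮ (w (g z)) : EuclideanSpace ℝ (Fin d)), z⟫ + t (g z) →
          g z ≤ k)) →
      stdGaussianE d {z | f z ≠ g z} ≤ ENNReal.ofReal (C * ε) := by
  refine ⟨3, by norm_num, ?_⟩
  intro d K hK ε hε hε1 w t V hV hproj f g hf hg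
  have hKpos : (0:ℝ) < (K:ℝ) := by
    have : 0 < K := lt_of_lt_of_le (by norm_num) hK
    exact_mod_cast this
  let A : Fin K × Fin K → Set (EuclideanSpace ℝ (Fin d)) := fun p =>
    {z | p.1 ≠ p.2 ∧ w p.1 ≠ w p.2 ∧
      |⟪w p.1 - w p.2, z⟫ + (t p.1 - t p.2)| ≤
        |⟪(Submodule.orthogonalProjectionOnto V (w p.1 - w p.2) : EuclideanSpace ℝ (Fin d)), z⟫|}
  have hsub : {z : EuclideanSpace ℝ (Fin d) | f z ≠ g z} ⊆ ⋃ p : Fin K × Fin K, A p := by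
    intro z hz
    refine Set.mem_iUnion.mpr ⟨(f z, g z), ?_⟩
    obtain ⟨hf1, hf2⟩ := hf z
    obtain ⟨hg1, hg2⟩ := hg z
    have hij : f z ≠ g z := hz
    have hX : 0 ≤ ⟪w (f z) - w (g z), z⟫ + (t (f z) - t (g z)) := by
      have h := hf1 (g z)
      rw [inner_sub_left]
      linarith
    have hY : ⟪(Submodule.orthogonalProjectionOnto Vᗮ (w (f z)) : EuclideanSpace ℝ (Fin d)) -
        (Submodule.orthogonalProjectionOnto Vᗮ (w (g z)) : EuclideanSpace ℝ (Fin d)), z⟫ +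
        (t (f z) - t (g z)) ≤ 0 := by
      have h := hg1 (f z)
      rw [inner_sub_left]
      linarith
    have hproj_eq : (Submodule.orthogonalProjectionOnto Vᗮ (w (f z)) : EuclideanSpace ℝ (Fin d)) -
        (Submodule.orthogonalProjectionOnto Vᗮ (w (g z)) : EuclideanSpace ℝ (Fin d)) =
        (w (f z) - w (g z)) -
          (Submodule.orthogonalProjectionOnto V (w (f z) - w (g z)) : EuclideanSpace ℝ (Fin d)) := by
      simp only [map_sub, AddSubgroupClass.coe_sub, ← Submodule.starProjection_apply, Submodule.starProjection_orthogonal_val]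
      abel
    have hw : w (f z) ≠ w (g z) := by
      intro hww
      have hX0 : 0 ≤ t (f z) - t (g z) := by
        rw [hww, sub_self, inner_zero_left, zero_add] at hX
        exact hX
      have hY0 : t (f z) - t (g z) ≤ 0 := by
        rw [hproj_eq, hww, sub_self, map_zero] at hY
        simp only [ZeroMemClass.coe_zero, sub_zero, inner_zero_left, zero_add] at hY
        exact hY
      have ht0 : t (f z) = t (g z) := by linarith
      have h1 : f z ≤ g z := hf2 (g z) (by rw [hww, ht0])
      have h2 : g z ≤ f z := hg2 (f z) (by
        rw [hww, ht0])
      exact hij (le_antisymm h1 h2)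
    refine ⟨hij, hw, ?_⟩
    rw [abs_of_nonneg hX]
    have hXY : (⟪w (f z) - w (g z), z⟫ + (t (f z) - t (g z))) -
        (⟪(Submodule.orthogonalProjectionOnto Vᗮ (w (f z)) : EuclideanSpace ℝ (Fin d)) -
          (Submodule.orthogonalProjectionOnto Vᗮ (w (g z)) : EuclideanSpace ℝ (Fin d)), z⟫ +
          (t (f z) - t (g z))) =
        ⟪(Submodule.orthogonalProjectionOnto V (w (f z) - w (g z)) : EuclideanSpace ℝ (Fin d)), z⟫ := by
      simp only [hproj_eq, inner_sub_left]
      ring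
    calc ⟪w (f z) - w (g z), z⟫ + (t (f z) - t (g z))
        ≤ (⟪w (f z) - w (g z), z⟫ + (t (f z) - t (g z))) -
          (⟪(Submodule.orthogonalProjectionOnto Vᗮ (w (f z)) : EuclideanSpace ℝ (Fin d)) -
            (Submodule.orthogonalProjectionOnto Vᗮ (w (g z)) : EuclideanSpace ℝ (Fin d)), z⟫ +
            (t (f z) - t (g z))) := by linarith
      _ = ⟪(Submodule.orthogonalProjectionOnto V (w (f z) - w (g z)) : EuclideanSpace ℝ (Fin d)), z⟫ := hXY
      _ ≤ |⟪(Submodule.orthogonalProjectionOnto V (w (f z) - w (g z)) : EuclideanSpace ℝ (Fin d)), z⟫| :=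
          le_abs_self _
  have hbound : ∀ p : Fin K × Fin K, stdGaussianE d (A p) ≤
      ENNReal.ofReal (3 * ε / (K:ℝ) ^ 2) := by
    intro p
    by_cases hp : p.1 ≠ p.2 ∧ w p.1 ≠ w p.2
    · refine le_trans (measure_mono ?_) (pair_bound hK hε hε1 (w p.1 - w p.2)
        (Submodule.orthogonalProjectionOnto V (w p.1 - w p.2) : EuclideanSpace ℝ (Fin d))
        (sub_ne_zero.mpr hp.2) (hproj p.1 p.2 hp.1) (t p.1 - t p.2))
      intro z hz
      exact hz.2.2
    · have : A p = ∅ := by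
        ext z
        constructor
        · rintro ⟨h1, h2, -⟩
          exact hp ⟨h1, h2⟩
        · intro h
          exact absurd h (Set.notMem_empty z)
      rw [this, measure_empty]
      positivity
  calc stdGaussianE d {z | f z ≠ g z} ≤ stdGaussianE d (⋃ p : Fin K × Fin K, A p) :=
        measure_mono hsub
    _ ≤ ∑' p : Fin K × Fin K, stdGaussianE d (A p) := measure_iUnion_le _
    _ = ∑ p : Fin K × Fin K, stdGaussianE d (A p) := tsum_fintype _
    _ ≤ ∑ _p : Fin K × Fin K, ENNReal.ofReal (3 * ε / (K:ℝ) ^ 2) :=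
        Finset.sum_le_sum fun p _ => hbound p
    _ = (K * K : ℕ) • ENNReal.ofReal (3 * ε / (K:ℝ) ^ 2) := by
        rw [Finset.sum_const]
        congr 1
        simp [Finset.card_univ]
    _ = ENNReal.ofReal ((K:ℝ) * K) * ENNReal.ofReal (3 * ε / (K:ℝ) ^ 2) := by
        rw [nsmul_eq_mul]
        congr 1
        rw [← ENNReal.ofReal_natCast]
        push_cast
        ring_nf
    _ = ENNReal.ofReal (((K:ℝ) * K) * (3 * ε / (K:ℝ) ^ 2)) :=
        (ENNReal.ofReal_mul (by positivity)).symm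
    _ = ENNReal.ofReal (3 * ε) := by
        congr 1
        field_simp
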